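/- Let n, r be positive integers and c, d integers. Set 𝒹₁ = gcd(c−d, n) and 𝒹₂ = gcd(c+(r−1)d, n). Then the number of vectors x = (x₁,...,x_r) ∈ (ℤ/nℤ)^r satisfying (c−d)(x_i − x_r) ≡ 0 (mod n) for all 1 ≤ i ≤ r−1 and (c+(r−1)d)(x₁ + x₂ + ⋯ + x_r) ≡ 0 (mod n) equals 𝒹₁^{r−1} · 𝒹₂ · gcd(n/𝒹₁, n/𝒹₂, r). -/

import Mathlib

open AddSubgroup

private lemma dvd_aux (n : ℕ) (hn : 0 < n) (a m : ℤ) :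
    (n : ℤ) ∣ a * m ↔ ((n / Int.gcd a n : ℕ) : ℤ) ∣ m := by
  have hgpos : 0 < Int.gcd a n := Int.gcd_pos_of_ne_zero_right a (by exact_mod_cast hn.ne')
  have hgnn : (Int.gcd a n) ∣ n := Int.natCast_dvd_natCast.mp (Int.gcd_dvd_right _ _)
  have hco0 : Int.gcd ((n : ℤ) / (Int.gcd a n : ℤ)) (a / (Int.gcd a n : ℤ)) = 1 := by
    rw [Int.gcd_comm]
    exact Int.gcd_div_gcd_div_gcd (i := a) (j := (n : ℤ)) (by exact_mod_cast hgpos)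
  set g : ℕ := Int.gcd a n with hg
  have hg0 : ((g : ℕ) : ℤ) ≠ 0 := by exact_mod_cast hgpos.ne'
  obtain ⟨a', ha'⟩ : ((g : ℕ) : ℤ) ∣ a := Int.gcd_dvd_left _ _
  obtain ⟨n', hn'⟩ : ((g : ℕ) : ℤ) ∣ (n : ℤ) := Int.gcd_dvd_right _ _
  have h1 : a / (g : ℤ) = a' := by rw [ha', Int.mul_ediv_cancel_left _ hg0]
  have h2 : (n : ℤ) / (g : ℤ) = n' := by rw [hn', Int.mul_ediv_cancel_left _ hg0]
  rw [h1, h2] at hco0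
  have hcast : ((n / g : ℕ) : ℤ) = n' := by
    apply mul_left_cancel₀ hg0
    calc ((g : ℕ) : ℤ) * ((n / g : ℕ) : ℤ)
        = ((g * (n / g) : ℕ) : ℤ) := by push_cast; ring
      _ = (n : ℤ) := by rw [Nat.mul_div_cancel' hgnn]
      _ = _ := hn'
  rw [hcast]
  constructor
  · intro h
    rw [hn', ha'] at h
    have h3 : n' ∣ a' * m := by
      rcases h with ⟨k, hk⟩
      refine ⟨k, mul_left_cancel₀ hg0 ?_⟩
      linear_combination hk
    exact Int.dvd_of_dvd_mul_right_of_gcd_one h3 hco0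
  · rintro ⟨k, rfl⟩
    rw [ha', hn']
    exact ⟨a' * k, by ring⟩

private lemma memK_iff (n : ℕ) (hn : 0 < n) (a : ℤ) (z : ZMod n) :
    ((a : ZMod n)) * z = 0 ↔ z ∈ zmultiples (((n / Int.gcd a n : ℕ) : ZMod n)) := by
  haveI : NeZero n := ⟨hn.ne'⟩
  have hz : ((z.val : ℕ) : ZMod n) = z := ZMod.natCast_rightInverse z
  constructor
  · intro h
    have h2 : (((a * z.val : ℤ)) : ZMod n) = 0 := by
      push_cast
      rw [hz]; exact h
    rw [ZMod.intCast_zmod_eq_zero_iff_dvd] at h2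
    obtain ⟨k, hk⟩ := (dvd_aux n hn a z.val).mp h2
    refine mem_zmultiples_iff.mpr ⟨k, ?_⟩
    rw [zsmul_eq_mul, ← hz]
    have hk2 := congrArg (fun w : ℤ => ((w : ZMod n))) hk
    simp only [Int.cast_mul, Int.cast_natCast] at hk2
    rw [hk2]; ring
  · intro h
    obtain ⟨k, hk⟩ := mem_zmultiples_iff.mp h
    rw [← hk, mul_smul_comm]
    have h0 : (((a * (n / Int.gcd a n : ℕ) : ℤ)) : ZMod n) = 0 := by
      rw [ZMod.intCast_zmod_eq_zero_iff_dvd]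
      exact (dvd_aux n hn a _).mpr dvd_rfl
    simp only [Int.cast_mul, Int.cast_natCast] at h0
    rw [h0, smul_zero]

private lemma cardK (n : ℕ) (hn : 0 < n) (g1 : ℕ) (hg1 : g1 ∣ n) :
    Nat.card (zmultiples (((n / g1 : ℕ) : ZMod n))) = g1 := by
  rw [Nat.card_zmultiples, ZMod.addOrderOf_coe _ hn.ne',
    Nat.gcd_eq_right (Nat.div_dvd_of_dvd hg1)]
  exact Nat.div_div_self hg1 hn.ne'

private lemma gcdF (n : ℕ) (hn : 0 < n) (b : ℤ) (g1 : ℕ) (hg1 : g1 ∣ n) (r : ℕ) :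
    Nat.gcd n (Int.gcd (b * ((n / g1 : ℕ) : ℤ)) (b * (r : ℤ)))
      = Int.gcd b n * Nat.gcd (Nat.gcd (n / g1) (n / Int.gcd b n)) r := by
  rw [Int.gcd_mul_left, Int.gcd_natCast_natCast]
  have hg2 : Int.gcd b (n : ℤ) = Nat.gcd b.natAbs n := by
    unfold Int.gcd; simp
  rw [hg2]
  set B := b.natAbs with hB
  set g2 := Nat.gcd B n with hg2d
  have hg2n : g2 ∣ n := Nat.gcd_dvd_right _ _
  have hg2pos : 0 < g2 := Nat.gcd_pos_of_pos_right _ hn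
  obtain ⟨n', hn'⟩ := hg2n
  obtain ⟨B', hB'⟩ : g2 ∣ B := Nat.gcd_dvd_left B n
  have hco : Nat.Coprime B' n' := by
    have h1 := Nat.coprime_div_gcd_div_gcd (m := B) (n := n) hg2pos
    rw [← hg2d, hB', hn', Nat.mul_div_cancel_left _ hg2pos,
      Nat.mul_div_cancel_left _ hg2pos] at h1
    exact h1
  have hnd : n / g2 = n' := by rw [hn', Nat.mul_div_cancel_left _ hg2pos]
  rw [hnd]
  set m := Nat.gcd (n / g1) r with hm
  calc Nat.gcd n (B * m) = Nat.gcd (g2 * n') (g2 * (B' * m)) := by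
        rw [← hn', hB', mul_assoc]
    _ = g2 * Nat.gcd n' (B' * m) := by rw [Nat.gcd_mul_left]
    _ = g2 * Nat.gcd n' m := by
        rw [Nat.gcd_comm n' (B' * m), hco.gcd_mul_left_cancel m, Nat.gcd_comm]
    _ = g2 * Nat.gcd (Nat.gcd (n / g1) n') r := by
        rw [Nat.gcd_comm n' m, hm, Nat.gcd_assoc, Nat.gcd_comm r n', ← Nat.gcd_assoc]

private lemma aux (n : ℕ) (hn : 0 < n) (m : ℕ) (a b : ℤ) :
    Nat.card {x : Fin (m + 1) → ZMod n //
      (∀ i : Fin (m + 1), i ≠ Fin.last m →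
        ((a : ZMod n)) * (x i - x (Fin.last m)) = 0) ∧
      ((b : ZMod n)) * (∑ i, x i) = 0}
    = Int.gcd a n ^ m * Int.gcd b n *
        Nat.gcd (Nat.gcd (n / Int.gcd a n) (n / Int.gcd b n)) (m + 1) := by
  haveI : NeZero n := ⟨hn.ne'⟩
  have hg1n : Int.gcd a n ∣ n := Int.natCast_dvd_natCast.mp (Int.gcd_dvd_right _ _)
  set g1 : ℕ := Int.gcd a n with hg1
  set c : ZMod n := ((n / g1 : ℕ) : ZMod n) with hc
  set K : AddSubgroup (ZMod n) := zmultiples c with hKdef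
  have memK : ∀ z : ZMod n, ((a : ZMod n)) * z = 0 ↔ z ∈ K := fun z => memK_iff n hn a z
  set ψ : ((Fin m → K) × ZMod n) →+ ZMod n := AddMonoidHom.mk'
    (fun p => (b : ZMod n) * (∑ i, ((p.1 i : ZMod n))) +
      (b : ZMod n) * (((m + 1 : ℕ)) : ZMod n) * p.2)
    (fun p q => by
      simp only [Prod.fst_add, Prod.snd_add, Pi.add_apply, AddSubgroup.coe_add]
      rw [Finset.sum_add_distrib]; ring) with hψ
  have hψapp : ∀ p : (Fin m → K) × ZMod n,
      ψ p = (b : ZMod n) * (∑ i, ((p.1 i : ZMod n))) +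
        (b : ZMod n) * (((m + 1 : ℕ)) : ZMod n) * p.2 := fun p => rfl
  have hcard : Nat.card {x : Fin (m + 1) → ZMod n //
      (∀ i : Fin (m + 1), i ≠ Fin.last m →
        ((a : ZMod n)) * (x i - x (Fin.last m)) = 0) ∧
      ((b : ZMod n)) * (∑ i, x i) = 0} = Nat.card ψ.ker := by
    apply Nat.card_congr
    refine ⟨fun x => ⟨(fun i => ⟨x.1 i.castSucc - x.1 (Fin.last m),
        (memK _).mp (x.2.1 _ (Fin.castSucc_lt_last i).ne)⟩, x.1 (Fin.last m)), ?_⟩,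
      fun p => ⟨Fin.lastCases p.1.2 (fun i => ((p.1.1 i : ZMod n)) + p.1.2), ?_, ?_⟩,
      ?_, ?_⟩
    · -- membership in the kernel
      rw [AddMonoidHom.mem_ker, hψapp]
      obtain ⟨x, hx1, hx2⟩ := x
      simp only
      rw [Fin.sum_univ_castSucc] at hx2
      have hsum : ∑ i : Fin m, (x i.castSucc - x (Fin.last m))
          = (∑ i : Fin m, x i.castSucc) - (m : ZMod n) * x (Fin.last m) := by
        rw [Finset.sum_sub_distrib, Finset.sum_const, Finset.card_univ, Fintype.card_fin,
          nsmul_eq_mul]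
      rw [hsum]
      push_cast
      linear_combination hx2
    · -- first condition
      intro i hi
      rcases Fin.eq_castSucc_or_eq_last i with ⟨j, rfl⟩ | rfl
      · simp only [Fin.lastCases_castSucc, Fin.lastCases_last, add_sub_cancel_right]
        exact (memK _).mpr (p.1.1 j).2
      · exact absurd rfl hi
    · -- second condition
      have h0 : ψ p.1 = 0 := p.2
      rw [hψapp] at h0
      rw [Fin.sum_univ_castSucc]
      simp only [Fin.lastCases_castSucc, Fin.lastCases_last]
      rw [Finset.sum_add_distrib, Finset.sum_const, Finset.card_univ, Fintype.card_fin,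
        nsmul_eq_mul]
      push_cast at h0 ⊢
      linear_combination h0
    · -- left inverse
      rintro ⟨x, hx⟩
      apply Subtype.ext
      funext i
      rcases Fin.eq_castSucc_or_eq_last i with ⟨j, rfl⟩ | rfl
      · simp
      · simp
    · -- right inverse
      rintro ⟨⟨y, t⟩, hp⟩
      apply Subtype.ext
      apply Prod.ext
      · funext i
        apply Subtype.ext
        simp
      · simp
  have h1 : Nat.card ((Fin m → K) × ZMod n) = g1 ^ m * n := by
    rw [Nat.card_prod, Nat.card_fun, Nat.card_zmod,
      Nat.card_eq_fintype_card (α := Fin m), Fintype.card_fin, hKdef,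
      cardK n hn g1 hg1n]
  have h2 : Nat.card ((Fin m → K) × ZMod n) = Nat.card ψ.range * Nat.card ψ.ker := by
    rw [AddSubgroup.card_eq_card_quotient_mul_card_addSubgroup ψ.ker]
    congr 1
    exact Nat.card_congr (QuotientAddGroup.quotientKerEquivRange ψ).toEquiv
  set G : ℕ := Int.gcd (b * ((n / g1 : ℕ) : ℤ)) (b * (((m + 1 : ℕ)) : ℤ)) with hG
  have hin : ∀ w : ℤ, (G : ℤ) ∣ w → ((w : ZMod n)) ∈ zmultiples ((G : ZMod n)) := by
    rintro w ⟨u, rfl⟩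
    refine mem_zmultiples_iff.mpr ⟨u, ?_⟩
    rw [zsmul_eq_mul]; push_cast; ring
  have hrange : ψ.range = zmultiples ((G : ZMod n)) := by
    apply le_antisymm
    · rintro w ⟨p, rfl⟩
      rw [hψapp]
      apply add_mem
      · rw [Finset.mul_sum]
        apply sum_mem
        intro i _
        obtain ⟨k, hk⟩ := mem_zmultiples_iff.mp (p.1 i).2
        have hbc : (b : ZMod n) * c = (((b * ((n / g1 : ℕ) : ℤ)) : ℤ) : ZMod n) := by
          rw [hc, Int.cast_mul, Int.cast_natCast]
        rw [← hk, mul_smul_comm, hbc]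
        exact zsmul_mem (hin _ (Int.gcd_dvd_left _ _)) k
      · have hw : ((p.2.val : ℕ) : ZMod n) = p.2 := ZMod.natCast_rightInverse p.2
        have heq : (b : ZMod n) * (((m + 1 : ℕ)) : ZMod n) * p.2
            = (p.2.val : ℕ) • (((b * (((m + 1 : ℕ)) : ℤ) : ℤ)) : ZMod n) := by
          rw [nsmul_eq_mul]
          simp only [Int.cast_mul, Int.cast_natCast]
          rw [hw]; ring
        rw [heq]
        exact nsmul_mem (hin _ (Int.gcd_dvd_right _ _)) _
    · rw [zmultiples_le]
      have hY : (((b * (((m + 1 : ℕ)) : ℤ) : ℤ)) : ZMod n) ∈ ψ.range := by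
        refine ⟨(0, 1), ?_⟩
        rw [hψapp]
        simp only [Prod.fst, Prod.snd, Pi.zero_apply, ZeroMemClass.coe_zero,
          Finset.sum_const_zero, mul_zero, zero_add, mul_one]
        push_cast
        ring
      have hX : (((b * ((n / g1 : ℕ) : ℤ) : ℤ)) : ZMod n) ∈ ψ.range := by
        rcases Nat.eq_zero_or_pos m with rfl | hm
        · have heq : (((b * ((n / g1 : ℕ) : ℤ) : ℤ)) : ZMod n)
              = ((n / g1 : ℕ) : ℤ) • (((b * (((0 + 1 : ℕ)) : ℤ) : ℤ)) : ZMod n) := by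
            simp only [zsmul_eq_mul, Int.cast_mul, Int.cast_natCast]
            push_cast
            ring
          rw [heq]
          exact zsmul_mem hY _
        · refine ⟨(fun i => if i = ⟨0, hm⟩ then ⟨c, mem_zmultiples c⟩ else 0, 0), ?_⟩
          rw [hψapp]
          simp only [mul_zero, add_zero]
          have hsum : (∑ i : Fin m, ((if i = (⟨0, hm⟩ : Fin m) then
              (⟨c, mem_zmultiples c⟩ : K) else 0 : K) : ZMod n)) = c := by
            rw [Finset.sum_eq_single (⟨0, hm⟩ : Fin m)]
            · simp
            · intro j _ hj; simp [hj]
            · intro hj; exact absurd (Finset.mem_univ _) hj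
          rw [hsum, hc, Int.cast_mul, Int.cast_natCast]
      obtain ⟨u, v, huv⟩ : ∃ u v : ℤ, (G : ℤ)
          = b * ((n / g1 : ℕ) : ℤ) * u + b * (((m + 1 : ℕ)) : ℤ) * v := by
        refine ⟨Int.gcdA (b * ((n / g1 : ℕ) : ℤ)) (b * (((m + 1 : ℕ)) : ℤ)),
          Int.gcdB (b * ((n / g1 : ℕ) : ℤ)) (b * (((m + 1 : ℕ)) : ℤ)), ?_⟩
        rw [hG]
        exact Int.gcd_eq_gcd_ab _ _
      have heq : ((G : ℕ) : ZMod n)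
          = u • (((b * ((n / g1 : ℕ) : ℤ) : ℤ)) : ZMod n)
            + v • (((b * (((m + 1 : ℕ)) : ℤ) : ℤ)) : ZMod n) := by
        have h := congrArg (fun z : ℤ => ((z : ZMod n))) huv
        simp only [Int.cast_add, Int.cast_mul, Int.cast_natCast] at h
        simp only [zsmul_eq_mul, Int.cast_mul, Int.cast_natCast]
        linear_combination h
      rw [heq]
      exact add_mem (zsmul_mem hX u) (zsmul_mem hY v)
  have h3 : Nat.card ψ.range = n / Nat.gcd n G := by
    rw [hrange, Nat.card_zmultiples, ZMod.addOrderOf_coe _ hn.ne']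
  have hGn : Nat.gcd n G ∣ n := Nat.gcd_dvd_left _ _
  have hq : 0 < n / Nat.gcd n G :=
    Nat.div_pos (Nat.le_of_dvd hn hGn) (Nat.gcd_pos_of_pos_left _ hn)
  have hker : Nat.card ψ.ker = g1 ^ m * Nat.gcd n G := by
    have h4 := h1.symm.trans h2
    rw [h3] at h4
    apply Nat.eq_of_mul_eq_mul_left hq
    rw [← h4, mul_left_comm, Nat.div_mul_cancel hGn]
  rw [hcard, hker, hG, gcdF n hn b g1 hg1n (m + 1)]
  ring

theorem stmt_7 (n r : ℕ) (hn : 0 < n) (hr : 0 < r) (c d : ℤ) :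
    Nat.card {x : Fin r → ZMod n //
      (∀ i : Fin r, i ≠ ⟨r - 1, by omega⟩ →
        ((c - d : ℤ) : ZMod n) * (x i - x ⟨r - 1, by omega⟩) = 0) ∧
      ((c + (r - 1) * d : ℤ) : ZMod n) * (∑ i, x i) = 0}
    = (Int.gcd (c - d) n) ^ (r - 1) * Int.gcd (c + (r - 1) * d) n *
      Nat.gcd (Nat.gcd (n / Int.gcd (c - d) n) (n / Int.gcd (c + (r - 1) * d) n)) r := by
  obtain ⟨m, rfl⟩ : ∃ m, r = m + 1 := ⟨r - 1, by omega⟩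
  simp only [Nat.cast_add, Nat.cast_one, add_sub_cancel_right]
  exact aux n hn m (c - d) (c + m * d)
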